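/- Let ⋏ be a binary operation on a finite set X that is idempotent, commutative, associative, and satisfies |{x⋏y, x⋏z, y⋏z}| ≤ 2 for all x,y,z ∈ X. Then the relation x ⪯ y defined by x⋏y = x is a partial order on X in which for every element v, the down-set {x : x ⪯ v} is a chain (i.e., totally ordered). -/
import Mathlib

theorem semilattice_tree_order {X : Type*} [Fintype X] [DecidableEq X]
    (m : X → X → X)
    (hidem : ∀ x, m x x = x)
    (hcomm : ∀ x y, m x y = m y x)
    (hassoc : ∀ x y z, m (m x y) z = m x (m y z))
    (h3 : ∀ x y z : X, ({m x y, m x z, m y z} : Finset X).card ≤ 2) :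
    (∀ x : X, m x x = x) ∧
    (∀ x y : X, m x y = x → m y x = y → x = y) ∧
    (∀ x y z : X, m x y = x → m y z = y → m x z = x) ∧
    (∀ v x y : X, m x v = x → m y v = y → (m x y = x ∨ m y x = y)) := by
  refine ⟨hidem, ?_, ?_, ?_⟩
  · intro x y h1 h2
    rw [← h1, hcomm, h2]
  · intro x y z h1 h2
    calc m x z = m (m x y) z := by rw [h1]
    _ = m x (m y z) := hassoc x y z
    _ = m x y := by rw [h2]
    _ = x := h1
  · intro v x y hx hy
    have key := h3 x y v
    rw [hx, hy] at key
    have htri : m x y = x ∨ m x y = y ∨ x = y := by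
      by_contra hc
      push_neg at hc
      obtain ⟨a, b, c⟩ := hc
      have : ({m x y, x, y} : Finset X).card = 3 := by
        rw [Finset.card_insert_of_notMem, Finset.card_insert_of_notMem,
          Finset.card_singleton] <;> simp [a, b, c]
      omega
    rcases htri with h | h | h
    · exact Or.inl h
    · exact Or.inr (by rw [hcomm, h])
    · exact Or.inl (by rw [h, hidem])
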